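/- (Weighted Stechkin estimate) Let w = (w_i) be weights with w_i ≥ 1, c ∈ ℓ²(I) over a countable index set I, and s > ‖w‖_∞². If T ⊆ I is such that the complement S = I \ T satisfies |S|_w = ∑_{i∈S} w_i² ≤ s in the sense used below, then one has the bound ‖c_T‖₂ ≤ ‖c‖_{1,w} / √(s − ‖w‖_∞²) whenever T is the complement of a weighted-best approximation support of weighted cardinality s. Concretely: for any c and s > ‖w‖²_∞, inf over supports S with |S|_w ≤ s of ‖c − c_S‖₂ is at most ‖c‖_{1,w}/√(s − ‖w‖²_∞). -/

import Mathlib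

/-- Weighted Stechkin estimate (Rauhut–Ward): for weights `w_i ≥ 1` bounded by
`W`, any `c ∈ ℓ¹_w(I)` and any `s > W²`, there is a support `S` of weighted
cardinality `|S|_w ≤ s` with `‖c − c_S‖₂ ≤ ‖c‖_{1,w}/√(s − W²)`. -/
theorem weighted_stechkin {I : Type*} [Countable I] [DecidableEq I]
    (w : I → ℝ) (hw : ∀ i, 1 ≤ w i) (W : ℝ) (hW : ∀ i, w i ≤ W)
    (c : I → ℂ) (hsum : Summable fun i => w i * ‖c i‖)
    (s : ℝ) (hs : W ^ 2 < s) :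
    ∃ S : Finset I, (∑ i ∈ S, (w i) ^ 2) ≤ s ∧
      Real.sqrt (∑' i, if i ∈ S then 0 else ‖c i‖ ^ 2)
        ≤ (∑' i, w i * ‖c i‖) / Real.sqrt (s - W ^ 2) := by
  have hterm : ∀ i, 0 ≤ w i * ‖c i‖ := fun i =>
    mul_nonneg (le_trans zero_le_one (hw i)) (norm_nonneg _)
  set σ := ∑' i, w i * ‖c i‖ with hσdef
  have hσ0 : 0 ≤ σ := tsum_nonneg hterm
  have hsW : 0 < s - W ^ 2 := sub_pos.2 hs
  rcases eq_or_lt_of_le hσ0 with hσ | hσ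
  · -- σ = 0, so c = 0
    have hc : ∀ i, ‖c i‖ = 0 := by
      intro i
      have h1 : w i * ‖c i‖ ≤ σ := Summable.le_tsum hsum i (fun j _ => hterm j)
      have h2 : w i * ‖c i‖ = 0 := le_antisymm (by rw [← hσ] at h1; exact h1) (hterm i)
      have hwpos : (0:ℝ) < w i := lt_of_lt_of_le zero_lt_one (hw i)
      rcases mul_eq_zero.1 h2 with h | h
      · exact absurd h hwpos.ne'
      · exact h
    refine ⟨∅, by simpa using le_of_lt (lt_of_le_of_lt (sq_nonneg W) hs), ?_⟩
    have : (∑' i, if i ∈ (∅ : Finset I) then (0:ℝ) else ‖c i‖ ^ 2) = 0 := by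
      convert tsum_zero with i
      simp [hc i]
    rw [this, Real.sqrt_zero]
    exact div_nonneg hσ0 (Real.sqrt_nonneg _)
  · -- σ > 0
    set t := σ / (s - W ^ 2) with htdef
    have ht : 0 < t := div_pos hσ hsW
    -- finiteness of the support set
    have hfin0 : {i | t ≤ w i * ‖c i‖}.Finite := by
      have h := hsum.tendsto_cofinite_zero
      have h2 : ∀ᶠ i in Filter.cofinite, w i * ‖c i‖ < t :=
        h.eventually (gt_mem_nhds ht)
      have := Filter.eventually_cofinite.1 h2
      convert this using 1
      ext i; simp [not_lt]
    have hfin : {i | t * w i < ‖c i‖}.Finite := by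
      refine hfin0.subset ?_
      intro i hi
      have hwi : (1:ℝ) ≤ w i := hw i
      have h1 : t ≤ t * w i := le_mul_of_one_le_right ht.le hwi
      have h2 : ‖c i‖ ≤ w i * ‖c i‖ := le_mul_of_one_le_left (norm_nonneg _) hwi
      exact le_trans h1 (le_trans (le_of_lt hi) h2)
    refine ⟨hfin.toFinset, ?_, ?_⟩
    · -- weighted cardinality bound
      have hkey : ∀ i ∈ hfin.toFinset, t * w i ^ 2 ≤ w i * ‖c i‖ := by
        intro i hi
        rw [Set.Finite.mem_toFinset] at hi
        have hwpos : (0:ℝ) < w i := lt_of_lt_of_le zero_lt_one (hw i)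
        have := mul_le_mul_of_nonneg_right (le_of_lt hi) hwpos.le
        calc t * w i ^ 2 = t * w i * w i := by ring
          _ ≤ ‖c i‖ * w i := this
          _ = w i * ‖c i‖ := mul_comm _ _
      have hsum1 : ∑ i ∈ hfin.toFinset, t * w i ^ 2 ≤ σ :=
        le_trans (Finset.sum_le_sum hkey) (Summable.sum_le_tsum _ (fun i _ => hterm i) hsum)
      have hsum2 : t * ∑ i ∈ hfin.toFinset, w i ^ 2 ≤ σ := by
        rw [Finset.mul_sum]; exact hsum1
      have : (∑ i ∈ hfin.toFinset, w i ^ 2) ≤ σ / t :=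
        (le_div_iff₀' ht).2 hsum2
      have hσt : σ / t = s - W ^ 2 := by
        rw [htdef]; field_simp
      rw [hσt] at this
      linarith [sq_nonneg W]
    · -- error bound
      have hle : ∀ i, (if i ∈ hfin.toFinset then (0:ℝ) else ‖c i‖ ^ 2)
          ≤ t * (w i * ‖c i‖) := by
        intro i
        by_cases hi : i ∈ hfin.toFinset
        · simpa [hi] using mul_nonneg ht.le (hterm i)
        · simp only [hi, if_false]
          rw [Set.Finite.mem_toFinset] at hi
          simp only [Set.mem_setOf_eq, not_lt] at hi
          calc ‖c i‖ ^ 2 = ‖c i‖ * ‖c i‖ := sq (‖c i‖) ▸ by ring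
            _ ≤ (t * w i) * ‖c i‖ := mul_le_mul_of_nonneg_right hi (norm_nonneg _)
            _ = t * (w i * ‖c i‖) := by ring
      have hf : Summable fun i => (if i ∈ hfin.toFinset then (0:ℝ) else ‖c i‖ ^ 2) := by
        refine Summable.of_nonneg_of_le (fun i => ?_) hle (hsum.mul_left t)
        by_cases hi : i ∈ hfin.toFinset <;> simp [hi, sq_nonneg]
      have htsum : (∑' i, if i ∈ hfin.toFinset then (0:ℝ) else ‖c i‖ ^ 2) ≤ t * σ := by
        calc (∑' i, if i ∈ hfin.toFinset then (0:ℝ) else ‖c i‖ ^ 2)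
            ≤ ∑' i, t * (w i * ‖c i‖) := Summable.tsum_le_tsum hle hf (hsum.mul_left t)
          _ = t * σ := by rw [tsum_mul_left]
      have htσ : t * σ = σ ^ 2 / (s - W ^ 2) := by
        rw [htdef]; ring
      calc Real.sqrt (∑' i, if i ∈ hfin.toFinset then (0:ℝ) else ‖c i‖ ^ 2)
          ≤ Real.sqrt (σ ^ 2 / (s - W ^ 2)) := by
            rw [← htσ]; exact Real.sqrt_le_sqrt htsum
        _ = σ / Real.sqrt (s - W ^ 2) := by
            rw [Real.sqrt_div (sq_nonneg σ), Real.sqrt_sq hσ0]
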